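/- With the notation below, for every integer a one has U_{2n−1}(a) = (−c)^{(n−1)a} · n · D^{n−1} · ( D^n (ε^a + ε̄^a) + (−1)^{n−1} ω^n (ε^a − ε̄^a) ); consequently the sequence (U_{2n−1}(a))_{a∈ℤ} satisfies the recurrence U_{2n−1}(a+2) = 2(−c)^{n−1} D^n · U_{2n−1}(a+1) + c · U_{2n−1}(a), with initial conditions U_{2n−1}(0) = 2nD^{2n−1} and U_{2n−1}(1) = 2nD^{n−1} if n is even, U_{2n−1}(1) = 2nD^{n−1}(2D^{2n} + c) if n is odd. -/

import Mathlib

open Polynomial IntermediateField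

private lemma aux_prod_lin (n : ℕ) (hn : 0 < n) (r b e : ℂ) (he : e ≠ 0) :
    (((X ^ n - C r : ℂ[X]).roots).map (fun z => b - e * z)).prod = b ^ n - r * e ^ n := by
  have hm : (X ^ n - C r : ℂ[X]).Monic := monic_X_pow_sub_C r hn.ne'
  have hsp : Splits (X ^ n - C r : ℂ[X]) := IsAlgClosed.splits _
  have hfact := hsp.eq_prod_roots_of_monic hm
  have hcard : Multiset.card ((X ^ n - C r : ℂ[X]).roots) = n := by
    rw [(splits_iff_card_roots).mp hsp, natDegree_X_pow_sub_C]
  have key : ∀ w : ℂ, (((X ^ n - C r : ℂ[X]).roots).map (fun z => w - z)).prod = w ^ n - r := by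
    intro w
    have := congrArg (eval w) hfact
    simpa [eval_multiset_prod, Multiset.map_map, Function.comp] using this.symm
  calc (((X ^ n - C r : ℂ[X]).roots).map (fun z => b - e * z)).prod
      = (((X ^ n - C r : ℂ[X]).roots).map (fun z => e * (b / e - z))).prod := by
        congr 1
        apply Multiset.map_congr rfl
        intro z _
        field_simp
    _ = (((X ^ n - C r : ℂ[X]).roots).map (fun _ => e)).prod *
        (((X ^ n - C r : ℂ[X]).roots).map (fun z => b / e - z)).prod := by
        rw [← Multiset.prod_map_mul]
    _ = e ^ n * ((b / e) ^ n - r) := by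
        rw [Multiset.map_const', Multiset.prod_replicate, hcard, key]
    _ = b ^ n - r * e ^ n := by
        rw [div_pow, mul_sub, mul_div_assoc', mul_div_cancel_left₀ _ (pow_ne_zero n he)]
        ring

private lemma aux_coeff_extract (n : ℕ) (hn : 0 < n) (G : ℕ → ℂ) (u s v t : ℂ)
    (h : ∀ x : ℂ, ∑ k ∈ Finset.range (2 * n + 1), (-1) ^ k * G k * x ^ (2 * n - k)
        = ((x - u) ^ n - s) * ((x - v) ^ n + t)) :
    - G (2 * n - 1)
      = ((-u) ^ n - s) * ((n : ℂ) * (-v) ^ (n - 1))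
        + ((n : ℂ) * (-u) ^ (n - 1)) * ((-v) ^ n + t) := by
  set p1 : ℂ[X] := ∑ k ∈ Finset.range (2 * n + 1), C ((-1) ^ k * G k) * X ^ (2 * n - k) with hp1
  set p2 : ℂ[X] := ((X - C u) ^ n - C s) * ((X - C v) ^ n + C t) with hp2
  have heval : ∀ x : ℂ, p1.eval x = p2.eval x := by
    intro x
    simp only [hp1, hp2, eval_finset_sum, eval_mul, eval_pow, eval_sub, eval_add, eval_C, eval_X]
    exact h x
  have hpq : p1 = p2 := Polynomial.funext heval
  have c1 : p1.coeff 1 = (-1) ^ (2 * n - 1) * G (2 * n - 1) := by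
    rw [hp1, finset_sum_coeff]
    simp only [coeff_C_mul, coeff_X_pow]
    rw [Finset.sum_eq_single (2 * n - 1)]
    · have : 2 * n - (2 * n - 1) = 1 := by omega
      rw [this]; simp
    · intro b hb hbne
      have : ¬ (1 = 2 * n - b) := by
        simp only [Finset.mem_range] at hb; omega
      simp [this]
    · intro hmem
      exfalso; apply hmem; simp only [Finset.mem_range]; omega
  have c2 : p2.coeff 1 = ((n : ℂ) * (-u) ^ (n - 1)) * ((-v) ^ n + t)
      + ((-u) ^ n - s) * ((n : ℂ) * (-v) ^ (n - 1)) := by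
    have hd : p2.coeff 1 = (derivative p2).eval 0 := by
      rw [← coeff_zero_eq_eval_zero, coeff_derivative]
      push_cast; ring
    rw [hd, hp2]
    simp only [derivative_mul, derivative_sub, derivative_add, derivative_pow,
      derivative_X_sub_C, derivative_C, mul_one, sub_zero, add_zero]
    simp only [derivative_X, eval_add, eval_mul, eval_sub, eval_pow, eval_natCast, eval_X,
      eval_C, eval_one, mul_one, zero_sub]
  have := hpq ▸ c1
  rw [c2] at this
  have hodd : Odd (2 * n - 1) := ⟨n - 1, by omega⟩
  rw [hodd.neg_one_pow] at this
  linear_combination -this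

/-- With the Bernstein–Hasse notation, for every integer `a`,
`U_{2n-1}(a) = (-c)^{(n-1)a} n D^{n-1} (D^n (ε^a + ε̄^a) + (-1)^{n-1} ω^n (ε^a - ε̄^a))`;
consequently `U_{2n-1}(a+2) = 2 (-c)^{n-1} D^n U_{2n-1}(a+1) + c U_{2n-1}(a)`, with
initial conditions `U_{2n-1}(0) = 2 n D^{2n-1}` and `U_{2n-1}(1) = 2 n D^{n-1}` if `n`
is even, `U_{2n-1}(1) = 2 n D^{n-1} (2 D^{2n} + c)` if `n` is odd. -/
theorem stmt_8
    (D n : ℕ) (hD : 0 < D) (hn : 2 ≤ n) (c : ℤ) (hc : c = 1 ∨ c = -1)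
    (hbig : 1 < (D : ℤ) ^ (2 * n) + c)
    (ω : ℝ) (hω : 1 < ω) (hωpow : ω ^ (2 * n) = (D : ℝ) ^ (2 * n) + (c : ℝ))
    (hdeg : (minpoly ℚ ((ω : ℂ))).natDegree = 2 * n)
    (K : IntermediateField ℚ ℂ) (hK : K = IntermediateField.adjoin ℚ {(ω : ℂ)})
    [FiniteDimensional ℚ K]
    (hmem : ∀ a : ℤ, ((D : ℂ) + (ω : ℂ)) * ((D : ℂ) ^ n + (ω : ℂ) ^ n) ^ a ∈ K)
    (U : ℕ → ℤ → ℂ)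
    (hU : ∀ (a : ℤ) (X Y : ℂ),
      (∏ φ : K →ₐ[ℚ] ℂ,
          (X - φ ⟨((D : ℂ) + (ω : ℂ)) * ((D : ℂ) ^ n + (ω : ℂ) ^ n) ^ a, hmem a⟩ * Y))
        = ∑ h ∈ Finset.range (2 * n + 1), (-1) ^ h * U h a * X ^ (2 * n - h) * Y ^ h)
    :
    (∀ a : ℤ,
      U (2 * n - 1) a = (-(c : ℂ)) ^ (((n : ℤ) - 1) * a) * (n : ℂ) * (D : ℂ) ^ (n - 1) *
        ((D : ℂ) ^ n * (((D : ℂ) ^ n + (ω : ℂ) ^ n) ^ a + ((D : ℂ) ^ n - (ω : ℂ) ^ n) ^ a)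
          + (-1 : ℂ) ^ (n - 1) * (ω : ℂ) ^ n *
            (((D : ℂ) ^ n + (ω : ℂ) ^ n) ^ a - ((D : ℂ) ^ n - (ω : ℂ) ^ n) ^ a))) ∧
    (∀ a : ℤ,
      U (2 * n - 1) (a + 2)
        = 2 * (-(c : ℂ)) ^ (n - 1) * (D : ℂ) ^ n * U (2 * n - 1) (a + 1)
          + (c : ℂ) * U (2 * n - 1) a) ∧
    U (2 * n - 1) 0 = 2 * (n : ℂ) * (D : ℂ) ^ (2 * n - 1) ∧
    (Even n → U (2 * n - 1) 1 = 2 * (n : ℂ) * (D : ℂ) ^ (n - 1)) ∧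
    (Odd n → U (2 * n - 1) 1
      = 2 * (n : ℂ) * (D : ℂ) ^ (n - 1) * (2 * (D : ℂ) ^ (2 * n) + (c : ℂ))) := by
  subst hK
  obtain ⟨m, rfl⟩ : ∃ m, n = m + 1 := ⟨n - 1, by omega⟩
  set n : ℕ := m + 1 with hn1
  -- basic facts
  have hm1 : 1 ≤ m := by omega
  have hωpos : (0:ℝ) < ω := by linarith
  have hωcne : ((ω : ℂ)) ≠ 0 := by
    simp only [ne_eq, Complex.ofReal_eq_zero]; positivity
  have hωC : ((ω : ℂ)) ^ (2 * n) = (D : ℂ) ^ (2 * n) + (c : ℂ) := by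
    have := congrArg (fun x : ℝ => (x : ℂ)) hωpow
    push_cast at this
    exact_mod_cast this
  have hsq : ((ω : ℂ)) ^ n * ((ω : ℂ)) ^ n = (D : ℂ) ^ (2 * n) + (c : ℂ) := by
    rw [← pow_add, ← two_mul, hωC]
  set εc : ℂ := (D : ℂ) ^ n + (ω : ℂ) ^ n with hεcdef
  set εb : ℂ := (D : ℂ) ^ n - (ω : ℂ) ^ n with hεbdef
  have hc2 : (c : ℂ) * (c : ℂ) = 1 := by rcases hc with rfl | rfl <;> norm_num
  have hcne : (-(c : ℂ)) ≠ 0 := by rcases hc with rfl | rfl <;> norm_num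
  have hεmul : εc * εb = -(c : ℂ) := by
    rw [hεcdef, hεbdef]
    linear_combination -hsq
  have hεc0 : εc ≠ 0 := left_ne_zero_of_mul (hεmul ▸ hcne)
  have hεb0 : εb ≠ 0 := right_ne_zero_of_mul (hεmul ▸ hcne)
  -- the minimal polynomial
  set Nq : ℚ := (D : ℚ) ^ (2 * n) + (c : ℚ) with hNq
  have hNC : ((algebraMap ℚ ℂ) Nq) = ((ω:ℂ)) ^ (2 * n) := by
    rw [hNq, eq_ratCast]
    push_cast
    rw [hωC]
  have hminp : minpoly ℚ ((ω : ℂ)) = X ^ (2 * n) - C Nq := by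
    have hpm : (X ^ (2 * n) - C Nq : ℚ[X]).Monic := monic_X_pow_sub_C _ (by omega)
    have hpdeg : (X ^ (2 * n) - C Nq : ℚ[X]).natDegree = 2 * n := natDegree_X_pow_sub_C
    have haev : (aeval ((ω : ℂ))) (X ^ (2 * n) - C Nq : ℚ[X]) = 0 := by
      simp only [map_sub, aeval_X_pow, aeval_C]
      rw [hNC]; ring
    have hint : IsIntegral ℚ ((ω : ℂ)) := ⟨_, hpm, haev⟩
    obtain ⟨q, hq⟩ := minpoly.dvd ℚ ((ω : ℂ)) haev
    have hmne : minpoly ℚ ((ω : ℂ)) ≠ 0 := minpoly.ne_zero hint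
    have hq0 : q ≠ 0 := by
      rintro rfl; rw [mul_zero] at hq; exact hpm.ne_zero hq
    have hqm : q.Monic := by
      have := hpm; rw [hq] at this
      exact (minpoly.monic hint).of_mul_monic_left this
    have hqdeg : q.natDegree = 0 := by
      have h1 := congrArg natDegree hq
      rw [natDegree_mul hmne hq0, hpdeg, hdeg] at h1
      omega
    rw [hq, eq_one_of_monic_natDegree_zero hqm hqdeg, mul_one]
  have hint : IsIntegral ℚ ((ω : ℂ)) := by
    refine ⟨X ^ (2 * n) - C Nq, monic_X_pow_sub_C _ (by omega), ?_⟩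
    rw [← hminp]; exact minpoly.aeval ℚ _
  -- the roots
  have haroots : (minpoly ℚ ((ω : ℂ))).aroots ℂ
      = (X ^ n - C (((ω : ℂ)) ^ n) : ℂ[X]).roots
        + (X ^ n - C (-((ω : ℂ)) ^ n) : ℂ[X]).roots := by
    have hmap : (minpoly ℚ ((ω:ℂ))).map (algebraMap ℚ ℂ)
        = (X ^ n - C (((ω:ℂ)) ^ n)) * (X ^ n - C (-((ω:ℂ)) ^ n)) := by
      rw [hminp]
      simp only [Polynomial.map_sub, Polynomial.map_pow, map_X, map_C, hNC]
      rw [show ((ω:ℂ)) ^ (2*n) = (ω:ℂ)^n * (ω:ℂ)^n from by rw [← pow_add, two_mul],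
        show ((X : ℂ[X])) ^ (2*n) = X^n * X^n from by rw [← pow_add, two_mul], map_mul, map_neg]
      ring
    rw [aroots_def, hmap, roots_mul]
    exact mul_ne_zero (monic_X_pow_sub_C _ (by omega : n ≠ 0)).ne_zero
      (monic_X_pow_sub_C _ (by omega : n ≠ 0)).ne_zero
  have hnodup : ((minpoly ℚ ((ω : ℂ))).aroots ℂ).Nodup := by
    apply nodup_roots
    rw [hminp]
    simp only [Polynomial.map_sub, Polynomial.map_pow, map_X, map_C]
    refine separable_X_pow_sub_C _ (Nat.cast_ne_zero.mpr (by omega : 2 * n ≠ 0)) ?_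
    rw [hNC]
    exact pow_ne_zero _ hωcne
  have hcard : Multiset.card ((minpoly ℚ ((ω : ℂ))).aroots ℂ) = 2 * n := by
    have hsp : Splits ((minpoly ℚ ((ω : ℂ))).map (algebraMap ℚ ℂ)) :=
      IsAlgClosed.splits _
    rw [aroots_def, (splits_iff_card_roots).mp hsp, hminp]
    simp only [Polynomial.map_sub, Polynomial.map_pow, map_X, map_C]
    exact natDegree_X_pow_sub_C
  -- embeddings and roots
  set gen : ℚ⟮(ω : ℂ)⟯ := IntermediateField.AdjoinSimple.gen ℚ ((ω : ℂ)) with hgen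
  have hgenmap : algebraMap (ℚ⟮(ω : ℂ)⟯) ℂ gen = ((ω : ℂ)) :=
    IntermediateField.AdjoinSimple.algebraMap_gen ℚ _
  have hminpoly_gen : minpoly ℚ gen = minpoly ℚ ((ω : ℂ)) := by
    have h := minpoly.algebraMap_eq (A := ℚ) (algebraMap (ℚ⟮(ω : ℂ)⟯) ℂ).injective gen
    rw [hgenmap] at h
    exact h.symm
  have hroot : ∀ φ : ℚ⟮(ω : ℂ)⟯ →ₐ[ℚ] ℂ, φ gen ∈ (minpoly ℚ ((ω : ℂ))).aroots ℂ := by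
    intro φ
    rw [mem_aroots]
    refine ⟨minpoly.ne_zero hint, ?_⟩
    rw [← hminpoly_gen, aeval_algHom_apply, minpoly.aeval, map_zero]
  have hinj : Function.Injective (fun φ : ℚ⟮(ω : ℂ)⟯ →ₐ[ℚ] ℂ => φ gen) := by
    intro φ₁ φ₂ h
    apply IntermediateField.adjoin_algHom_ext
    intro x hx
    rcases hx with rfl
    exact h
  have hcardhom : Fintype.card (ℚ⟮(ω : ℂ)⟯ →ₐ[ℚ] ℂ) = 2 * n := by
    rw [AlgHom.card, IntermediateField.adjoin.finrank hint, hdeg]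
  have himg : Finset.univ.image (fun φ : ℚ⟮(ω : ℂ)⟯ →ₐ[ℚ] ℂ => φ gen)
      = ((minpoly ℚ ((ω : ℂ))).aroots ℂ).toFinset := by
    apply Finset.eq_of_subset_of_card_le
    · intro z hz
      simp only [Finset.mem_image] at hz
      obtain ⟨φ, _, rfl⟩ := hz
      exact Multiset.mem_toFinset.mpr (hroot φ)
    · rw [Multiset.toFinset_card_of_nodup hnodup, hcard,
        Finset.card_image_of_injective _ hinj, Finset.card_univ, hcardhom]
  have hva : ∀ (a : ℤ) (φ : ℚ⟮(ω : ℂ)⟯ →ₐ[ℚ] ℂ),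
      φ ⟨((D : ℂ) + (ω : ℂ)) * ((D : ℂ) ^ n + (ω : ℂ) ^ n) ^ a, hmem a⟩
        = ((D : ℂ) + φ gen) * ((D : ℂ) ^ n + (φ gen) ^ n) ^ a := by
    intro a φ
    have h1 : (algebraMap (ℚ⟮(ω : ℂ)⟯) ℂ) (((D : ℚ⟮(ω : ℂ)⟯) ^ n + gen ^ n) ^ a)
        = ((D : ℂ) ^ n + ((ω : ℂ)) ^ n) ^ a := by
      rw [map_zpow₀, map_add, map_pow, map_pow, map_natCast, hgenmap]
    have hval : (⟨((D : ℂ) + (ω : ℂ)) * ((D : ℂ) ^ n + (ω : ℂ) ^ n) ^ a, hmem a⟩ : ℚ⟮(ω : ℂ)⟯)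
        = ((D : ℚ⟮(ω : ℂ)⟯) + gen) * ((D : ℚ⟮(ω : ℂ)⟯) ^ n + gen ^ n) ^ a := by
      apply Subtype.ext
      show ((D : ℂ) + (ω : ℂ)) * ((D : ℂ) ^ n + (ω : ℂ) ^ n) ^ a
          = (algebraMap (ℚ⟮(ω : ℂ)⟯) ℂ)
              (((D : ℚ⟮(ω : ℂ)⟯) + gen) * ((D : ℚ⟮(ω : ℂ)⟯) ^ n + gen ^ n) ^ a)
      rw [map_mul, map_add, map_natCast, hgenmap, h1]
    rw [hval, map_mul, map_add, map_zpow₀, map_add, map_pow, map_pow, map_natCast]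
  -- the key product identity
  have hsum : ∀ (a : ℤ) (x : ℂ),
      ∑ k ∈ Finset.range (2 * n + 1), (-1) ^ k * U k a * x ^ (2 * n - k)
        = ((x - (D : ℂ) * εc ^ a) ^ n - ((ω : ℂ)) ^ n * (εc ^ a) ^ n)
          * ((x - (D : ℂ) * εb ^ a) ^ n + ((ω : ℂ)) ^ n * (εb ^ a) ^ n) := by
    intro a x
    have h0 := hU a x 1
    simp only [mul_one, one_pow] at h0
    rw [← h0]
    calc (∏ φ : ℚ⟮(ω : ℂ)⟯ →ₐ[ℚ] ℂ,
          (x - φ ⟨((D : ℂ) + (ω : ℂ)) * ((D : ℂ) ^ n + (ω : ℂ) ^ n) ^ a, hmem a⟩))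
        = ∏ φ : ℚ⟮(ω : ℂ)⟯ →ₐ[ℚ] ℂ,
            (x - ((D : ℂ) + φ gen) * ((D : ℂ) ^ n + (φ gen) ^ n) ^ a) := by
          apply Finset.prod_congr rfl
          intro φ _
          rw [hva a φ]
      _ = ∏ z ∈ ((minpoly ℚ ((ω : ℂ))).aroots ℂ).toFinset,
            (x - ((D : ℂ) + z) * ((D : ℂ) ^ n + z ^ n) ^ a) := by
          rw [← himg, Finset.prod_image (fun x _ y _ h => hinj h)]
      _ = (((minpoly ℚ ((ω : ℂ))).aroots ℂ).map
            (fun z => x - ((D : ℂ) + z) * ((D : ℂ) ^ n + z ^ n) ^ a)).prod := by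
          rw [Finset.prod_eq_multiset_prod]
          congr 1
          rw [Multiset.toFinset_val, Multiset.dedup_eq_self.mpr hnodup]
      _ = ((x - (D : ℂ) * εc ^ a) ^ n - ((ω : ℂ)) ^ n * (εc ^ a) ^ n)
            * ((x - (D : ℂ) * εb ^ a) ^ n + ((ω : ℂ)) ^ n * (εb ^ a) ^ n) := by
          rw [haroots, Multiset.map_add, Multiset.prod_add]
          have hpc : ((X ^ n - C (((ω : ℂ)) ^ n) : ℂ[X]).roots.map
              (fun z => x - ((D : ℂ) + z) * ((D : ℂ) ^ n + z ^ n) ^ a)).prod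
              = (x - (D : ℂ) * εc ^ a) ^ n - ((ω : ℂ)) ^ n * (εc ^ a) ^ n := by
            rw [Multiset.map_congr rfl (fun z hz => ?_),
              aux_prod_lin n (by omega) (((ω : ℂ)) ^ n) (x - (D : ℂ) * εc ^ a) (εc ^ a)
                (zpow_ne_zero _ hεc0)]
            have hzn : z ^ n = ((ω : ℂ)) ^ n := by
              have := isRoot_of_mem_roots hz
              simp only [IsRoot, eval_sub, eval_pow, eval_X, eval_C] at this
              linear_combination this
            rw [hzn, ← hεcdef]
            ring
          have hpb : ((X ^ n - C (-((ω : ℂ)) ^ n) : ℂ[X]).roots.map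
              (fun z => x - ((D : ℂ) + z) * ((D : ℂ) ^ n + z ^ n) ^ a)).prod
              = (x - (D : ℂ) * εb ^ a) ^ n + ((ω : ℂ)) ^ n * (εb ^ a) ^ n := by
            rw [Multiset.map_congr rfl (fun z hz => ?_),
              aux_prod_lin n (by omega) (-((ω : ℂ)) ^ n) (x - (D : ℂ) * εb ^ a) (εb ^ a)
                (zpow_ne_zero _ hεb0)]
            · ring
            have hzn : z ^ n = -((ω : ℂ)) ^ n := by
              have := isRoot_of_mem_roots hz
              simp only [IsRoot, eval_sub, eval_pow, eval_X, eval_C] at this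
              linear_combination this
            rw [hzn, show (D:ℂ)^n + -((ω : ℂ))^n = εb from by rw [hεbdef]; ring]
            ring
          rw [hpc, hpb]
  -- main formula
  have hmain : ∀ a : ℤ,
      U (2 * n - 1) a = (-(c : ℂ)) ^ (((n : ℤ) - 1) * a) * (n : ℂ) * (D : ℂ) ^ (n - 1) *
        ((D : ℂ) ^ n * (εc ^ a + εb ^ a)
          + (-1 : ℂ) ^ (n - 1) * (ω : ℂ) ^ n * (εc ^ a - εb ^ a)) := by
    intro a
    have hco := aux_coeff_extract n (by omega) (fun k => U k a)
      ((D : ℂ) * εc ^ a) (((ω : ℂ)) ^ n * (εc ^ a) ^ n)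
      ((D : ℂ) * εb ^ a) (((ω : ℂ)) ^ n * (εb ^ a) ^ n) (hsum a)
    have hUa : U (2 * n - 1) a
        = -( (((-((D : ℂ) * εc ^ a)) ^ n - ((ω : ℂ)) ^ n * (εc ^ a) ^ n)
            * ((n : ℂ) * (-((D : ℂ) * εb ^ a)) ^ (n - 1)))
          + (((n : ℂ) * (-((D : ℂ) * εc ^ a)) ^ (n - 1))
            * ((-((D : ℂ) * εb ^ a)) ^ n + ((ω : ℂ)) ^ n * (εb ^ a) ^ n)) ) := by
      linear_combination -hco
    rw [hUa]
    have hxy : εc ^ a * εb ^ a = (-(c : ℂ)) ^ a := by rw [← mul_zpow, hεmul]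
    have hk : (-(c : ℂ)) ^ (((n : ℤ) - 1) * a) = (εc ^ a * εb ^ a) ^ m := by
      rw [show ((n : ℤ) - 1) * a = a * (m : ℤ) from by push_cast [hn1]; ring,
        zpow_mul, zpow_natCast, hxy]
    rw [hk]
    simp only [hn1, Nat.add_sub_cancel]
    rcases Nat.even_or_odd m with hpar | hpar
    · simp only [neg_pow, pow_succ, hpar.neg_one_pow]
      push_cast
      ring
    · simp only [neg_pow, pow_succ, hpar.neg_one_pow]
      push_cast
      ring
  refine ⟨hmain, ?_, ?_, ?_, ?_⟩
  · -- recurrence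
    intro a
    rw [hmain a, hmain (a + 1), hmain (a + 2)]
    have hεc2 : εc * εc = 2 * (D : ℂ) ^ n * εc + (c : ℂ) := by
      rw [hεcdef]; linear_combination hsq
    have hεb2 : εb * εb = 2 * (D : ℂ) ^ n * εb + (c : ℂ) := by
      rw [hεbdef]; linear_combination hsq
    have hC2 : εc ^ (a + 2) = εc ^ a * εc * εc := by
      rw [show a + 2 = a + 1 + 1 from by ring, zpow_add_one₀ hεc0, zpow_add_one₀ hεc0]
    have hC1 : εc ^ (a + 1) = εc ^ a * εc := zpow_add_one₀ hεc0 a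
    have hB2 : εb ^ (a + 2) = εb ^ a * εb * εb := by
      rw [show a + 2 = a + 1 + 1 from by ring, zpow_add_one₀ hεb0, zpow_add_one₀ hεb0]
    have hB1 : εb ^ (a + 1) = εb ^ a * εb := zpow_add_one₀ hεb0 a
    have hs2 : (-(c : ℂ)) ^ (((n : ℤ) - 1) * (a + 2))
        = (-(c : ℂ)) ^ (((n : ℤ) - 1) * a) * (-(c : ℂ)) ^ m * (-(c : ℂ)) ^ m := by
      rw [show ((n : ℤ) - 1) * (a + 2) = ((n : ℤ) - 1) * a + (m : ℤ) + (m : ℤ) from by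
        push_cast [hn1]; ring, zpow_add₀ hcne, zpow_add₀ hcne, zpow_natCast]
    have hs1 : (-(c : ℂ)) ^ (((n : ℤ) - 1) * (a + 1))
        = (-(c : ℂ)) ^ (((n : ℤ) - 1) * a) * (-(c : ℂ)) ^ m := by
      rw [show ((n : ℤ) - 1) * (a + 1) = ((n : ℤ) - 1) * a + (m : ℤ) from by
        push_cast [hn1]; ring, zpow_add₀ hcne, zpow_natCast]
    have hw2 : (-(c : ℂ)) ^ m * (-(c : ℂ)) ^ m = 1 := by
      rw [← mul_pow, show (-(c : ℂ)) * (-(c : ℂ)) = (c : ℂ) * (c : ℂ) from by ring, hc2,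
        one_pow]
    rw [hC2, hC1, hB2, hB1, hs2, hs1]
    simp only [hn1, Nat.add_sub_cancel]
    push_cast
    set s : ℂ := (-(c : ℂ)) ^ (((m : ℤ) + 1 - 1) * a) with hs
    set w : ℂ := (-(c : ℂ)) ^ m with hw
    set t : ℂ := (-1 : ℂ) ^ m with ht
    linear_combination
      (s * ((m : ℂ) + 1) * (D : ℂ) ^ m * ((D : ℂ) ^ (m + 1) + t * ((ω : ℂ)) ^ (m + 1))
        * (εc ^ a) * w * w) * hεc2
      + (s * ((m : ℂ) + 1) * (D : ℂ) ^ m * ((D : ℂ) ^ (m + 1) - t * ((ω : ℂ)) ^ (m + 1))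
        * (εb ^ a) * w * w) * hεb2
      + (s * ((m : ℂ) + 1) * (D : ℂ) ^ m * (c : ℂ)
        * (((D : ℂ) ^ (m + 1) + t * ((ω : ℂ)) ^ (m + 1)) * (εc ^ a)
          + ((D : ℂ) ^ (m + 1) - t * ((ω : ℂ)) ^ (m + 1)) * (εb ^ a))) * hw2
  · -- value at 0
    rw [hmain 0]
    simp only [mul_zero, zpow_zero]
    rw [show 2 * n - 1 = 2 * m + 1 from by omega, show n - 1 = m from by omega]
    push_cast
    ring
  · -- value at 1, n even
    intro hev
    have hoddm : Odd m := by
      rw [hn1] at hev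
      exact Nat.not_even_iff_odd.mp (Nat.even_add_one.mp hev)
    rw [hmain 1]
    simp only [mul_one, zpow_one]
    rw [show ((n : ℤ) - 1) = (m : ℤ) from by push_cast [hn1]; ring, zpow_natCast]
    rw [show n - 1 = m from by omega]
    rw [hoddm.neg_one_pow]
    rcases hc with rfl | rfl
    · have : (-((1 : ℤ) : ℂ)) ^ m = -1 := by push_cast; exact hoddm.neg_one_pow
      rw [this]
      push_cast
      linear_combination (2 * (n : ℂ) * (D : ℂ) ^ m) * hsq
    · have : (-((-1 : ℤ) : ℂ)) ^ m = 1 := by push_cast; norm_num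
      rw [this]
      push_cast
      linear_combination (-(2 * (n : ℂ) * (D : ℂ) ^ m)) * hsq
  · -- value at 1, n odd
    intro hodd
    have hevm : Even m := by
      rw [hn1] at hodd
      by_contra h
      exact (Nat.not_even_iff_odd.mpr hodd) (Nat.even_add_one.mpr h)
    rw [hmain 1]
    simp only [mul_one, zpow_one]
    rw [show ((n : ℤ) - 1) = (m : ℤ) from by push_cast [hn1]; ring, zpow_natCast]
    rw [show n - 1 = m from by omega]
    rw [hevm.neg_one_pow]
    rcases hc with rfl | rfl
    · have : (-((1 : ℤ) : ℂ)) ^ m = 1 := by push_cast; exact hevm.neg_one_pow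
      rw [this]
      push_cast
      linear_combination (2 * (n : ℂ) * (D : ℂ) ^ m) * hsq
    · have : (-((-1 : ℤ) : ℂ)) ^ m = 1 := by push_cast; norm_num
      rw [this]
      push_cast
      linear_combination (2 * (n : ℂ) * (D : ℂ) ^ m) * hsq
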